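/- Let N be a Novikov algebra over ℂ satisfying (x,x,x) = (xx)x − x(xx) = 0 for all x ∈ N. Then the commutative product x∘y := xy + yx satisfies the Jordan identity (x∘y)∘(x∘x) = x∘(y∘(x∘x)) for all x,y ∈ N; that is, N is Jordan-admissible. -/
import Mathlib


/-- A Novikov algebra with (x,x,x) = 0 for all x is Jordan-admissible:
the product x∘y = xy + yx satisfies the Jordan identity. -/
theorem stmt13
    {N : Type*} [AddCommGroup N] [Module ℂ N]
    (mul : N →ₗ[ℂ] N →ₗ[ℂ] N)
    (hlsym : ∀ x y z : N,
      mul (mul x y) z - mul x (mul y z) = mul (mul y x) z - mul y (mul x z))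
    (hrcomm : ∀ x y z : N, mul (mul x y) z = mul (mul x z) y)
    (hxxx : ∀ x : N, mul (mul x x) x - mul x (mul x x) = 0)
    (circ : N → N → N)
    (hcirc : ∀ x y : N, circ x y = mul x y + mul y x) :
    ∀ x y : N, circ (circ x y) (circ x x) = circ x (circ y (circ x x)) := by
  intro x y
  have hT1 : mul y (mul (mul x x) x) - mul y (mul x (mul x x)) = 0 := by
    have := congrArg (mul y) (hxxx x)
    simpa [map_sub] using this
  have hT2 : mul (mul (mul x x) x) y - mul (mul x (mul x x)) y = 0 := by
    have := congrArg (fun t => mul t y) (hxxx x)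
    simpa [map_sub, LinearMap.sub_apply] using this
  simp only [hcirc, map_add, LinearMap.add_apply]
  linear_combination (norm := module)
    (2:ℂ) • hlsym x y (mul x x) + (2:ℂ) • hlsym x (mul x x) y +
    (2:ℂ) • hlsym y (mul x x) x + (4:ℂ) • hrcomm y x (mul x x) +
    (2:ℂ) • hT1 + (2:ℂ) • hT2
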